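/- The bivariate generating function f(u) = sum_{k >= m+1} u^k f_k for partial GDAP bounded below by y = m and ending with an up-step at ordinate k satisfies f(u) = (1 - u + x^2 u^{m+1} f(1)) / (1 - u - xu + xu^2 + x^2 u), where f_0 also counts the empty path. -/

import Mathlib

open PowerSeries

/-- A valid step sequence: each step is an up-step `1` or a down-step `-k` (`k ≥ 1`),
and no two down-steps are consecutive. -/
def GoodSteps (p : List ℤ) : Prop :=
  (∀ s ∈ p, s = 1 ∨ s ≤ -1) ∧ List.Chain' (fun a b => a = 1 ∨ b = 1) p

/-- A Dyck path with air pockets: nonempty, valid steps, ends on the x-axis,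
stays weakly above the x-axis. -/
def IsDAP (p : List ℤ) : Prop :=
  p ≠ [] ∧ GoodSteps p ∧ p.sum = 0 ∧ ∀ i, 0 ≤ (p.take i).sum

/-- A grand Dyck path with air pockets: valid steps, ends on the x-axis
(possibly going below it); the empty path is allowed. -/
def IsGDAP (p : List ℤ) : Prop := GoodSteps p ∧ p.sum = 0

/-- Number of DAP of length `n`. -/
noncomputable def dapCount (n : ℕ) : ℕ :=
  Nat.card {p : List ℤ // IsDAP p ∧ p.length = n}

/-- The path never goes strictly below the line `y = m`. -/
def BoundedBelow (m : ℤ) (p : List ℤ) : Prop := ∀ i, m ≤ (p.take i).sum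

/-- Number of partial GDAP bounded below by `y = m`, of length `n`, ending at ordinate `k`
with an up-step (the empty path being counted for `k = 0`). -/
noncomputable def fCount (m k : ℤ) (n : ℕ) : ℕ :=
  Nat.card {p : List ℤ // GoodSteps p ∧ BoundedBelow m p ∧ p.length = n ∧ p.sum = k ∧
    (p = [] ∨ p.getLast? = some 1)}

/-- The generating function `f_k(x)`. -/
noncomputable def fSeries (m k : ℤ) : PowerSeries ℚ := PowerSeries.mk fun n => (fCount m k n : ℚ)

/-- `f(1) = ∑_k f_k`: the generating function of all partial GDAP bounded below by `y = m`
ending with an up-step (plus the empty path). -/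
noncomputable def fOne (m : ℤ) : PowerSeries ℚ :=
  PowerSeries.mk fun n => (Nat.card {p : List ℤ // GoodSteps p ∧ BoundedBelow m p ∧
    p.length = n ∧ (p = [] ∨ p.getLast? = some 1)} : ℚ)

/-- `u^{-m} f(u) = ∑_{k ≥ m+1} u^{k-m} f_k`, as a power series in `u` (outer variable)
with coefficients power series in `x` (inner variable); the coefficient of `u^j` is
`f_{m+j}` (note `f_m = 0`). -/
noncomputable def bigF (m : ℤ) : PowerSeries (PowerSeries ℚ) :=
  PowerSeries.mk fun j => fSeries m (m + j)

/-! ### Auxiliary definitions -/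

/-- Count of paths ending with a down-step. -/
noncomputable def gCount (m k : ℤ) (n : ℕ) : ℕ :=
  Nat.card {p : List ℤ // GoodSteps p ∧ BoundedBelow m p ∧ p.length = n ∧ p.sum = k ∧
    ¬(p = [] ∨ p.getLast? = some 1)}

noncomputable def gSeries (m k : ℤ) : PowerSeries ℚ := PowerSeries.mk fun n => (gCount m k n : ℚ)

/-- Count of paths ending with an up-step (or empty) with sum at least `s`. -/
noncomputable def uCount (m s : ℤ) (n : ℕ) : ℕ :=
  Nat.card {p : List ℤ // GoodSteps p ∧ BoundedBelow m p ∧ p.length = n ∧ s ≤ p.sum ∧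
    (p = [] ∨ p.getLast? = some 1)}

/-! ### Basic lemmas -/

lemma goodSteps_nil : GoodSteps [] := ⟨by simp, List.isChain_nil⟩

lemma boundedBelow_sum {m : ℤ} {p : List ℤ} (h : BoundedBelow m p) : m ≤ p.sum := by
  simpa using h p.length

lemma sum_take_le_of_good {p : List ℤ} (hg : ∀ s ∈ p, s ≤ 1) (i : ℕ) :
    (p.take i).sum ≤ (i : ℤ) := by
  have h1 := List.sum_le_card_nsmul (p.take i) 1 (fun x hx => hg x (List.mem_of_mem_take hx))
  have h2 : (p.take i).length ≤ i := by simp [List.length_take]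
  simp only [nsmul_eq_mul, mul_one] at h1
  exact h1.trans (by exact_mod_cast h2)

lemma mem_entry_bound {m : ℤ} {n : ℕ} {p : List ℤ} (hg : GoodSteps p)
    (hb : BoundedBelow m p) (hl : p.length = n) : ∀ x ∈ p, x ∈ Set.Icc (m - (n : ℤ)) 1 := by
  intro x hx
  obtain ⟨i, hi, rfl⟩ := List.mem_iff_getElem.mp hx
  constructor
  · have h1 : (p.take (i + 1)).sum = (p.take i).sum + p[i] := List.sum_take_succ p i hi
    have h2 := hb (i + 1)
    have h3 : (p.take i).sum ≤ (i : ℤ) := sum_take_le_of_good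
      (fun s hs => by rcases hg.1 s hs with h | h <;> omega) i
    have h4 : (i : ℤ) ≤ (n : ℤ) := by exact_mod_cast le_of_lt (hl ▸ hi)
    linarith
  · rcases hg.1 _ hx with h | h <;> omega

lemma finite_big (m : ℤ) (n : ℕ) :
    {p : List ℤ | p.length = n ∧ ∀ x ∈ p, x ∈ Set.Icc (m - (n : ℤ)) 1}.Finite := by
  haveI : Finite ↥(Set.Icc (m - (n : ℤ)) 1) := (Set.finite_Icc _ _).to_subtype
  have h1 : {l : List ↥(Set.Icc (m - (n : ℤ)) 1) | l.length = n}.Finite :=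
    List.finite_length_eq _ n
  refine (h1.image (List.map Subtype.val)).subset ?_
  rintro p ⟨hl, hmem⟩
  refine ⟨p.attach.map (fun x => ⟨x.1, hmem x.1 x.2⟩), by simp [hl], ?_⟩
  simp [List.map_map]

lemma finite_cond (m : ℤ) (n : ℕ) (Q : List ℤ → Prop)
    (hQ : ∀ p, Q p → GoodSteps p ∧ BoundedBelow m p ∧ p.length = n) :
    Finite {p : List ℤ // Q p} := by
  have : {p : List ℤ | Q p}.Finite := by
    refine (finite_big m n).subset ?_
    intro p hp
    obtain ⟨hg, hb, hl⟩ := hQ p hp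
    exact ⟨hl, mem_entry_bound hg hb hl⟩
  exact this.to_subtype

/-! ### Appending a step -/

lemma boundedBelow_append {m : ℤ} {q : List ℤ} {c : ℤ} :
    BoundedBelow m (q ++ [c]) ↔ BoundedBelow m q ∧ m ≤ q.sum + c := by
  constructor
  · intro h
    constructor
    · intro i
      rcases le_or_gt i q.length with hi | hi
      · have := h i
        rwa [List.take_append_of_le_length hi] at this
      · rw [List.take_of_length_le (le_of_lt hi)]
        have := h q.length
        rwa [List.take_append_of_le_length le_rfl, List.take_length] at this
    · have := h (q.length + 1)
      rwa [List.take_of_length_le (by simp), List.sum_append, List.sum_singleton] at this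
  · rintro ⟨h1, h2⟩ i
    rcases le_or_gt i q.length with hi | hi
    · rw [List.take_append_of_le_length hi]
      exact h1 i
    · rw [List.take_of_length_le (by simp; omega), List.sum_append, List.sum_singleton]
      exact h2

lemma goodSteps_append {q : List ℤ} {c : ℤ} :
    GoodSteps (q ++ [c]) ↔
      GoodSteps q ∧ (c = 1 ∨ c ≤ -1) ∧ (c = 1 ∨ q = [] ∨ q.getLast? = some 1) := by
  unfold GoodSteps List.Chain'
  rw [List.isChain_append]
  constructor
  · rintro ⟨hmem, hq, -, hlast⟩
    refine ⟨⟨fun s hs => hmem s (by simp [hs]), hq⟩, hmem c (by simp), ?_⟩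
    by_cases hc : c = 1
    · exact Or.inl hc
    rcases hq' : q.getLast? with _ | a
    · exact Or.inr (Or.inl (List.getLast?_eq_none_iff.mp hq'))
    · rcases hlast a hq' c (by simp) with h1 | h1
      · exact Or.inr (Or.inr (by simp [hq', h1]))
      · exact absurd h1 hc
  · rintro ⟨⟨hmem, hq⟩, hc, hl⟩
    refine ⟨?_, hq, List.isChain_singleton _, ?_⟩
    · intro s hs
      rcases List.mem_append.mp hs with h | h
      · exact hmem s h
      · simp only [List.mem_singleton] at h
        subst h; exact hc
    · intro x hx y hy
      simp only [List.head?_cons, Option.mem_def, Option.some.injEq] at hy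
      subst hy
      rcases hl with h | h | h
      · exact Or.inr h
      · rw [h] at hx; simp at hx
      · rw [h] at hx
        simp only [Option.mem_def, Option.some.injEq] at hx
        exact Or.inl hx.symm

lemma sum_append_singleton (q : List ℤ) (c : ℤ) : (q ++ [c]).sum = q.sum + c := by
  rw [List.sum_append, List.sum_singleton]

/-! ### The equivalences -/

def equivUp (m k : ℤ) (n : ℕ) :
    {p : List ℤ // GoodSteps p ∧ BoundedBelow m p ∧ p.length = n ∧ p.sum = k - 1} ≃
    {p : List ℤ // GoodSteps p ∧ BoundedBelow m p ∧ p.length = n + 1 ∧ p.sum = k ∧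
      (p = [] ∨ p.getLast? = some 1)} where
  toFun q := ⟨q.1 ++ [1], by
    obtain ⟨hg, hb, hl, hs⟩ := q.2
    refine ⟨goodSteps_append.mpr ⟨hg, Or.inl rfl, Or.inl rfl⟩,
      boundedBelow_append.mpr ⟨hb, ?_⟩, by simp [hl], ?_, Or.inr (by simp)⟩
    · have := boundedBelow_sum hb; omega
    · rw [sum_append_singleton, hs]; ring⟩
  invFun p := ⟨p.1.dropLast, by
    obtain ⟨hg, hb, hl, hs, hlast⟩ := p.2
    have hp : p.1 ≠ [] := by intro h; rw [h] at hl; simp at hl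
    have hlast' : p.1.getLast? = some 1 := hlast.resolve_left hp
    have hdec : p.1.dropLast ++ [1] = p.1 := List.dropLast_append_getLast? 1 hlast'
    rw [← hdec] at hg hb hs
    refine ⟨(goodSteps_append.mp hg).1, (boundedBelow_append.mp hb).1, ?_, ?_⟩
    · rw [List.length_dropLast, hl]; omega
    · rw [sum_append_singleton] at hs; omega⟩
  left_inv q := Subtype.ext (by simp)
  right_inv p := Subtype.ext (by
    obtain ⟨hg, hb, hl, hs, hlast⟩ := p.2
    have hp : p.1 ≠ [] := by intro h; rw [h] at hl; simp at hl
    exact List.dropLast_append_getLast? 1 (hlast.resolve_left hp))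

def equivDown (m k : ℤ) (n : ℕ) (hk : m ≤ k) :
    {p : List ℤ // GoodSteps p ∧ BoundedBelow m p ∧ p.length = n ∧ k + 1 ≤ p.sum ∧
      (p = [] ∨ p.getLast? = some 1)} ≃
    {p : List ℤ // GoodSteps p ∧ BoundedBelow m p ∧ p.length = n + 1 ∧ p.sum = k ∧
      ¬(p = [] ∨ p.getLast? = some 1)} where
  toFun q := ⟨q.1 ++ [k - q.1.sum], by
    obtain ⟨hg, hb, hl, hs, hlast⟩ := q.2
    refine ⟨goodSteps_append.mpr ⟨hg, Or.inr (by omega), Or.inr hlast⟩,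
      boundedBelow_append.mpr ⟨hb, by omega⟩, by simp [hl],
      by rw [sum_append_singleton]; ring, ?_⟩
    rw [not_or]
    refine ⟨by simp, ?_⟩
    rw [List.getLast?_concat]
    intro h
    simp only [Option.some.injEq] at h
    omega⟩
  invFun p := ⟨p.1.dropLast, by
    obtain ⟨hg, hb, hl, hs, hlast⟩ := p.2
    rw [not_or] at hlast
    obtain ⟨hp, hne⟩ := hlast
    have hlast' : p.1.getLast? = some (p.1.getLast hp) := List.getLast?_eq_getLast hp
    have hdec : p.1.dropLast ++ [p.1.getLast hp] = p.1 := List.dropLast_append_getLast hp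
    rw [← hdec] at hg hb hs
    obtain ⟨hg', hc, hl'⟩ := goodSteps_append.mp hg
    have hc1 : p.1.getLast hp ≠ 1 := by
      intro h; rw [h] at hlast'; exact hne hlast'
    have hcle : p.1.getLast hp ≤ -1 := hc.resolve_left hc1
    obtain ⟨hb', hbs⟩ := boundedBelow_append.mp hb
    rw [sum_append_singleton] at hs
    refine ⟨hg', hb', ?_, ?_, hl'.resolve_left hc1⟩
    · rw [List.length_dropLast, hl]; omega
    · omega⟩
  left_inv q := Subtype.ext (by simp)
  right_inv p := Subtype.ext (by
    obtain ⟨hg, hb, hl, hs, hlast⟩ := p.2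
    rw [not_or] at hlast
    obtain ⟨hp, hne⟩ := hlast
    have hdec : p.1.dropLast ++ [p.1.getLast hp] = p.1 := List.dropLast_append_getLast hp
    have hsum : p.1.dropLast.sum + p.1.getLast hp = k := by
      have h := congrArg List.sum hdec
      rw [sum_append_singleton] at h
      exact h.trans hs
    calc p.1.dropLast ++ [k - p.1.dropLast.sum]
        = p.1.dropLast ++ [p.1.getLast hp] := by rw [show k - p.1.dropLast.sum
            = p.1.getLast hp by omega]
      _ = p.1 := hdec)

/-! ### Counting lemmas -/

lemma card_split {α : Type*} (P A : α → Prop) [Finite {x // P x ∧ A x}]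
    [Finite {x // P x ∧ ¬A x}] :
    Nat.card {x // P x} = Nat.card {x // P x ∧ A x} + Nat.card {x // P x ∧ ¬A x} := by
  classical
  rw [← Nat.card_sum]
  exact Nat.card_congr (((Equiv.sumCompl fun q : {x // P x} => A q.1).symm).trans
    (Equiv.sumCongr (Equiv.subtypeSubtypeEquivSubtypeInter P A)
      (Equiv.subtypeSubtypeEquivSubtypeInter P fun x => ¬A x)))

lemma fCount_succ (m k : ℤ) (n : ℕ) :
    fCount m k (n + 1) = fCount m (k - 1) n + gCount m (k - 1) n := by
  classical
  haveI : Finite {p : List ℤ // (GoodSteps p ∧ BoundedBelow m p ∧ p.length = n ∧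
      p.sum = k - 1) ∧ (p = [] ∨ p.getLast? = some 1)} :=
    finite_cond m n _ (fun p hp => ⟨hp.1.1, hp.1.2.1, hp.1.2.2.1⟩)
  haveI : Finite {p : List ℤ // (GoodSteps p ∧ BoundedBelow m p ∧ p.length = n ∧
      p.sum = k - 1) ∧ ¬(p = [] ∨ p.getLast? = some 1)} :=
    finite_cond m n _ (fun p hp => ⟨hp.1.1, hp.1.2.1, hp.1.2.2.1⟩)
  rw [fCount, ← Nat.card_congr (equivUp m k n),
    card_split (fun p => GoodSteps p ∧ BoundedBelow m p ∧ p.length = n ∧ p.sum = k - 1)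
      (fun p => p = [] ∨ p.getLast? = some 1), fCount, gCount]
  congr 1 <;> exact Nat.card_congr (Equiv.subtypeEquivRight (fun p => by tauto))

lemma uCount_eq (m s : ℤ) (n : ℕ) :
    uCount m s n = fCount m s n + uCount m (s + 1) n := by
  classical
  haveI : Finite {p : List ℤ // (GoodSteps p ∧ BoundedBelow m p ∧ p.length = n ∧
      s ≤ p.sum ∧ (p = [] ∨ p.getLast? = some 1)) ∧ p.sum = s} :=
    finite_cond m n _ (fun p hp => ⟨hp.1.1, hp.1.2.1, hp.1.2.2.1⟩)
  haveI : Finite {p : List ℤ // (GoodSteps p ∧ BoundedBelow m p ∧ p.length = n ∧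
      s ≤ p.sum ∧ (p = [] ∨ p.getLast? = some 1)) ∧ ¬p.sum = s} :=
    finite_cond m n _ (fun p hp => ⟨hp.1.1, hp.1.2.1, hp.1.2.2.1⟩)
  rw [uCount,
    card_split (fun p => GoodSteps p ∧ BoundedBelow m p ∧ p.length = n ∧ s ≤ p.sum ∧
      (p = [] ∨ p.getLast? = some 1)) (fun p => p.sum = s), fCount, uCount]
  congr 1
  · exact Nat.card_congr (Equiv.subtypeEquivRight (fun p => by
      constructor
      · rintro ⟨⟨h1, h2, h3, h4, h5⟩, h6⟩; exact ⟨h1, h2, h3, h6, h5⟩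
      · rintro ⟨h1, h2, h3, h4, h5⟩; exact ⟨⟨h1, h2, h3, le_of_eq h4.symm, h5⟩, h4⟩))
  · exact Nat.card_congr (Equiv.subtypeEquivRight (fun p => by
      constructor
      · rintro ⟨⟨h1, h2, h3, h4, h5⟩, h6⟩; exact ⟨h1, h2, h3, by omega, h5⟩
      · rintro ⟨h1, h2, h3, h4, h5⟩; exact ⟨⟨h1, h2, h3, by omega, h5⟩, by omega⟩))

lemma uCount_g (m k : ℤ) (n : ℕ) (hk : m ≤ k) :
    uCount m (k + 1) n = gCount m k (n + 1) := Nat.card_congr (equivDown m k n hk)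

lemma gCount_rec (m k : ℤ) (n : ℕ) (hk : m ≤ k) :
    gCount m k (n + 1) = fCount m (k + 1) n + gCount m (k + 1) (n + 1) := by
  rw [← uCount_g m k n hk, uCount_eq]
  congr 1
  exact uCount_g m (k + 1) n (by omega)

lemma gCount_zero (m k : ℤ) : gCount m k 0 = 0 := by
  rw [gCount]
  haveI : IsEmpty {p : List ℤ // GoodSteps p ∧ BoundedBelow m p ∧ p.length = 0 ∧ p.sum = k ∧
      ¬(p = [] ∨ p.getLast? = some 1)} := by
    refine ⟨fun x => ?_⟩
    exact x.2.2.2.2.2 (Or.inl (List.length_eq_zero_iff.mp x.2.2.2.1))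
  exact Nat.card_of_isEmpty

lemma fOne_count (m : ℤ) (n : ℕ) :
    Nat.card {p : List ℤ // GoodSteps p ∧ BoundedBelow m p ∧ p.length = n ∧
      (p = [] ∨ p.getLast? = some 1)} = fCount m m n + gCount m m (n + 1) := by
  have h1 : Nat.card {p : List ℤ // GoodSteps p ∧ BoundedBelow m p ∧ p.length = n ∧
      (p = [] ∨ p.getLast? = some 1)} = uCount m m n := by
    refine Nat.card_congr (Equiv.subtypeEquivRight (fun p => ?_))
    constructor
    · rintro ⟨h1, h2, h3, h4⟩; exact ⟨h1, h2, h3, boundedBelow_sum h2, h4⟩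
    · rintro ⟨h1, h2, h3, h4, h5⟩; exact ⟨h1, h2, h3, h5⟩
  rw [h1, uCount_eq, uCount_g m m n le_rfl]

lemma fCount_zero (m k : ℤ) (hm : m ≤ 0) : fCount m k 0 = if k = 0 then 1 else 0 := by
  rw [fCount]
  split_ifs with h
  · subst h
    haveI : Unique {p : List ℤ // GoodSteps p ∧ BoundedBelow m p ∧ p.length = 0 ∧ p.sum = 0 ∧
        (p = [] ∨ p.getLast? = some 1)} :=
      { default := ⟨[], goodSteps_nil, fun i => by simpa using hm, rfl, rfl, Or.inl rfl⟩
        uniq := fun x => Subtype.ext (List.length_eq_zero_iff.mp x.2.2.2.1) }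
    exact Nat.card_unique
  · haveI : IsEmpty {p : List ℤ // GoodSteps p ∧ BoundedBelow m p ∧ p.length = 0 ∧ p.sum = k ∧
        (p = [] ∨ p.getLast? = some 1)} := by
      refine ⟨fun x => h ?_⟩
      have hx : x.1 = [] := List.length_eq_zero_iff.mp x.2.2.2.1
      have := x.2.2.2.2.1
      rw [hx] at this
      simpa using this.symm
    exact Nat.card_of_isEmpty

lemma fCount_bottom (m : ℤ) (n : ℕ) (hm : m ≤ 0) :
    fCount m m n = if m = 0 ∧ n = 0 then 1 else 0 := by
  split_ifs with h
  · obtain ⟨h1, h2⟩ := h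
    subst h1; subst h2
    rw [fCount_zero 0 0 le_rfl]
    simp
  · rw [fCount]
    haveI : IsEmpty {p : List ℤ // GoodSteps p ∧ BoundedBelow m p ∧ p.length = n ∧ p.sum = m ∧
        (p = [] ∨ p.getLast? = some 1)} := by
      refine ⟨fun x => ?_⟩
      obtain ⟨hg, hb, hl, hs, hlast⟩ := x.2
      rcases hlast with hnil | hlast'
      · rw [hnil] at hs hl
        simp at hs hl
        exact h ⟨by omega, by omega⟩
      · have hp : x.1 ≠ [] := by
          intro hx; rw [hx] at hlast'; simp at hlast'
        have hdec : x.1.dropLast ++ [1] = x.1 := List.dropLast_append_getLast? 1 hlast'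
        rw [← hdec] at hb hs
        have h1 := boundedBelow_sum (boundedBelow_append.mp hb).1
        rw [sum_append_singleton] at hs
        omega
    exact Nat.card_of_isEmpty

/-! ### Series-level lemmas -/

lemma coeff_X_mul' (f : PowerSeries ℚ) (n : ℕ) :
    coeff n (X * f) = if n = 0 then 0 else coeff (n - 1) f := by
  cases n with
  | zero => simp [coeff_zero_eq_constantCoeff, map_mul]
  | succ n => rw [coeff_succ_X_mul]; simp

lemma seriesA (m : ℤ) (hm : m ≤ 0) (k : ℤ) :
    fSeries m k = (if k = 0 then 1 else 0) + X * fSeries m (k - 1) + X * gSeries m (k - 1) := by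
  ext n
  rw [map_add, map_add, coeff_X_mul', coeff_X_mul']
  cases n with
  | zero =>
    simp only [if_pos rfl, fSeries, coeff_mk, fCount_zero m k hm]
    rw [show (coeff 0) (if k = 0 then (1 : PowerSeries ℚ) else 0)
      = if k = 0 then 1 else 0 by split_ifs <;> simp]
    split_ifs <;> simp
  | succ n =>
    simp only [Nat.succ_ne_zero, if_neg, Nat.add_sub_cancel, fSeries, gSeries, coeff_mk]
    rw [show (coeff (n + 1)) (if k = 0 then (1 : PowerSeries ℚ) else 0) = 0 by
      split_ifs <;> simp [coeff_one]]
    rw [fCount_succ]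
    push_cast
    ring

lemma seriesC (m k : ℤ) (hk : m ≤ k) :
    gSeries m k = X * fSeries m (k + 1) + gSeries m (k + 1) := by
  ext n
  rw [map_add, coeff_X_mul']
  cases n with
  | zero => simp [gSeries, coeff_mk, gCount_zero]
  | succ n =>
    simp only [Nat.succ_ne_zero, if_neg, Nat.add_sub_cancel, fSeries, gSeries, coeff_mk]
    rw [gCount_rec m k n hk]
    push_cast
    ring

lemma seriesE (m : ℤ) : X * fOne m = X * fSeries m m + gSeries m m := by
  ext n
  rw [map_add, coeff_X_mul', coeff_X_mul']
  cases n with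
  | zero => simp [gSeries, coeff_mk, gCount_zero]
  | succ n =>
    simp only [Nat.succ_ne_zero, if_neg, Nat.add_sub_cancel, fSeries, gSeries, fOne, coeff_mk]
    rw [fOne_count m n]
    push_cast
    ring

lemma seriesF0 (m : ℤ) (hm : m ≤ 0) : fSeries m m = if m = 0 then 1 else 0 := by
  ext n
  rw [fSeries, coeff_mk, fCount_bottom m n hm]
  by_cases hm0 : m = 0
  · subst hm0
    simp only [if_pos rfl, true_and, coeff_one]
    split_ifs with h <;> simp [h]
  · simp [hm0]

/-! ### The three coefficient identities -/

lemma keyQ1 (m : ℤ) (hm : m ≤ 0) :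
    fSeries m (m + 1) = (1 + X - X ^ 2) * fSeries m m
      + ((if m = -1 then 1 else 0) - (if m = 0 then 1 else 0) + X ^ 2 * fOne m) := by
  have h1 := seriesA m hm (m + 1)
  rw [add_sub_cancel_right] at h1
  have h2 := seriesE m
  have h3 := seriesF0 m hm
  have hc : (if m + 1 = 0 then (1 : PowerSeries ℚ) else 0) = if m = -1 then 1 else 0 := by
    split_ifs with a b b
    · rfl
    · omega
    · omega
    · rfl
  rw [hc] at h1
  linear_combination h1 - X * h2 - h3

lemma keyQ2 (m k : ℤ) (hm : m ≤ 0) (hk : m ≤ k) :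
    fSeries m (k + 2) = (1 + X - X ^ 2) * fSeries m (k + 1) - X * fSeries m k
      + ((if k + 2 = 0 then 1 else 0) - (if k + 1 = 0 then 1 else 0)) := by
  have h1 := seriesA m hm (k + 2)
  rw [show (k + 2 - 1 : ℤ) = k + 1 by ring] at h1
  have h2 := seriesA m hm (k + 1)
  rw [add_sub_cancel_right] at h2
  have h3 := seriesC m k hk
  linear_combination h1 - h2 - X * h3

lemma coeff_outer (a b : PowerSeries ℚ) (F : PowerSeries (PowerSeries ℚ)) (j : ℕ) :
    coeff j (F - C (R := PowerSeries ℚ) a * (F * X ^ 1)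
        + C (R := PowerSeries ℚ) b * (F * X ^ 2)) =
      coeff j F
        - a * (if 1 ≤ j then coeff (j - 1) F else 0)
        + b * (if 2 ≤ j then coeff (j - 2) F else 0) := by
  rw [map_add, map_sub, coeff_C_mul, coeff_C_mul, coeff_mul_X_pow', coeff_mul_X_pow']

lemma coeff_outer2 (cc : PowerSeries ℚ) (a : ℕ) (j : ℕ) :
    coeff j (C (R := PowerSeries ℚ) cc * X ^ 1 + (X ^ a - X ^ (a + 1))) =
      cc * (if j = 1 then 1 else 0)
        + ((if j = a then 1 else 0) - (if j = a + 1 then 1 else 0)) := by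
  rw [map_add, map_sub, coeff_C_mul, coeff_X_pow, coeff_X_pow, coeff_X_pow]

/-! ### The main theorem -/

theorem stmt8 : ∀ m : ℤ, m ≤ 0 →
    bigF m *
      (1 - X - C (R := PowerSeries ℚ) X * X + C (R := PowerSeries ℚ) X * X ^ 2
        + (C (R := PowerSeries ℚ) X) ^ 2 * X) =
    X ^ m.natAbs * (1 - X) + (C (R := PowerSeries ℚ) X) ^ 2 * X * C (R := PowerSeries ℚ) (fOne m) := by
  intro m hm
  have hD : bigF m *
      (1 - X - C (R := PowerSeries ℚ) X * X + C (R := PowerSeries ℚ) X * X ^ 2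
        + (C (R := PowerSeries ℚ) X) ^ 2 * X) =
      bigF m - C (R := PowerSeries ℚ) ((1 : PowerSeries ℚ) + X - X ^ 2) * (bigF m * X ^ 1)
        + C (R := PowerSeries ℚ) (X : PowerSeries ℚ) * (bigF m * X ^ 2) := by
    rw [map_sub, map_add, map_one, map_pow]
    ring
  have hR : (X : PowerSeries (PowerSeries ℚ)) ^ m.natAbs * (1 - X)
      + (C (R := PowerSeries ℚ) X) ^ 2 * X * C (R := PowerSeries ℚ) (fOne m) =
      C (R := PowerSeries ℚ) ((X : PowerSeries ℚ) ^ 2 * fOne m) * X ^ 1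
        + (X ^ m.natAbs - X ^ (m.natAbs + 1)) := by
    rw [map_mul, map_pow]
    ring
  rw [hD, hR]
  refine PowerSeries.ext fun j => ?_
  rw [coeff_outer, coeff_outer2]
  simp only [bigF, coeff_mk]
  match j with
  | 0 =>
    rw [if_neg (by omega : ¬(1 : ℕ) ≤ 0), if_neg (by omega : ¬(2 : ℕ) ≤ 0),
      if_neg (by omega : ¬(0 : ℕ) = 1), if_neg (by omega : ¬(0 : ℕ) = m.natAbs + 1)]
    rw [show (m + ((0 : ℕ) : ℤ)) = m by push_cast; ring, seriesF0 m hm]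
    by_cases h : m = 0
    · rw [if_pos h, if_pos (by omega : (0 : ℕ) = m.natAbs)]
      ring
    · rw [if_neg h, if_neg (by omega : ¬(0 : ℕ) = m.natAbs)]
      ring
  | 1 =>
    rw [if_pos (le_refl 1), if_neg (by omega : ¬(2 : ℕ) ≤ 1), if_pos (rfl : (1 : ℕ) = 1)]
    rw [show (m + ((1 : ℕ) : ℤ)) = m + 1 by push_cast; ring,
      show ((1 : ℕ) - 1 : ℕ) = 0 from rfl, show (m + ((0 : ℕ) : ℤ)) = m by push_cast; ring]
    have hiff1 : ((1 : ℕ) = m.natAbs) ↔ (m = -1) := by omega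
    have hiff2 : ((1 : ℕ) = m.natAbs + 1) ↔ (m = 0) := by omega
    simp only [hiff1, hiff2]
    linear_combination keyQ1 m hm
  | (i + 2) =>
    rw [if_pos (by omega : 1 ≤ i + 2), if_pos (by omega : 2 ≤ i + 2),
      if_neg (by omega : ¬(i + 2) = 1)]
    rw [show (i + 2) - 1 = i + 1 by omega, show (i + 2) - 2 = i by omega]
    rw [show (m + ((i + 2 : ℕ) : ℤ)) = (m + (i : ℕ)) + 2 by push_cast; ring,
      show (m + ((i + 1 : ℕ) : ℤ)) = (m + (i : ℕ)) + 1 by push_cast; ring]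
    have hiff1 : ((i + 2 : ℕ) = m.natAbs) ↔ ((m + (i : ℕ)) + 2 = 0) := by omega
    have hiff2 : ((i + 2 : ℕ) = m.natAbs + 1) ↔ ((m + (i : ℕ)) + 1 = 0) := by omega
    simp only [hiff1, hiff2]
    linear_combination keyQ2 m (m + (i : ℕ)) hm (by omega)
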